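/- Let f, g : K → L be maps of simplicial sets and suppose there is a homotopy H : K × Δ[1] → L from f to g. Then there is a homotopy 𝐄𝐱 K × Δ[1] → 𝐄𝐱 L from 𝐄𝐱 f to 𝐄𝐱 g; in particular, the functor 𝐄𝐱 preserves simplicial homotopy equivalences. -/

import Mathlib

open CategoryTheory CategoryTheory.Limits Simplicial SSet

noncomputable section

/-- Objects of the direct category `D[n]`: pairs `([k], φ)` of a natural number `k` and an
order-preserving map `φ : [k] → [n]`. -/
structure DObj (n : ℕ) : Type where
  k : ℕ
  φ : Fin (k + 1) →o Fin (n + 1)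

/-- Morphisms `([k], φ) → ([k'], φ')` of `D[n]`: injective order-preserving maps
`f : [k] → [k']` with `φ' ∘ f = φ`. -/
@[ext]
structure DHom {n : ℕ} (x y : DObj n) : Type where
  f : Fin (x.k + 1) →o Fin (y.k + 1)
  inj : Function.Injective f
  comm : y.φ.comp f = x.φ

instance DCat (n : ℕ) : Category (DObj n) where
  Hom := DHom
  id x := ⟨OrderHom.id, fun _ _ h => h, rfl⟩
  comp {x y z} g h := ⟨h.f.comp g.f, h.inj.comp g.inj, by
    change (z.φ.comp h.f).comp g.f = x.φ
    rw [h.comm, g.comm]⟩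
  id_comp f := rfl
  comp_id f := rfl
  assoc f g h := rfl

/-- An order-preserving map `θ : [n] → [n']` induces a functor `D[n] ⥤ D[n']` by
postcomposition with `θ`. -/
def Dmap {n n' : ℕ} (θ : Fin (n + 1) →o Fin (n' + 1)) : DObj n ⥤ DObj n' where
  obj x := ⟨x.k, θ.comp x.φ⟩
  map {x y} g := ⟨g.f, g.inj, by
    change θ.comp (y.φ.comp g.f) = θ.comp x.φ
    rw [g.comm]⟩
  map_id _ := rfl
  map_comp _ _ := rfl

/-- `D` as a cosimplicial category. -/
def Dfunctor : SimplexCategory ⥤ Cat where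
  obj a := Cat.of (DObj a.len)
  map θ := (Dmap θ.toOrderHom).toCatHom
  map_id _ := rfl
  map_comp _ _ := rfl

/-- The cosimplicial simplicial set `N D[-]` (`N` is the nerve functor). -/
def ND : SimplexCategory ⥤ SSet := Dfunctor ⋙ nerveFunctor

/-- The fattened `Ex` functor: `(𝐄𝐱 K)_n = Hom(N D[n], K)`, with simplicial operators
acting by precomposition with the maps `N Dθ`. -/
def Ex (K : SSet) : SSet where
  obj m := ND.obj m.unop ⟶ K
  map θ := TypeCat.ofHom fun g => ND.map θ.unop ≫ g
  map_id m := by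
    refine ConcreteCategory.hom_ext _ _ fun g => ?_
    change ND.map (𝟙 m.unop) ≫ g = g
    simp
  map_comp {m m' m''} θ θ' := by
    refine ConcreteCategory.hom_ext _ _ fun g => ?_
    change ND.map (θ'.unop ≫ θ.unop) ≫ g = ND.map θ'.unop ≫ ND.map θ.unop ≫ g
    simp

/-- Functoriality of `𝐄𝐱` in the simplicial set, by postcomposition. -/
def ExMap {K L : SSet} (f : K ⟶ L) : Ex K ⟶ Ex L where
  app m := TypeCat.ofHom fun g => g ≫ f
  naturality m m' θ := by
    refine ConcreteCategory.hom_ext _ _ fun g => ?_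
    change (ND.map θ.unop ≫ g) ≫ f = ND.map θ.unop ≫ g ≫ f
    exact Category.assoc _ _ _

/-- The map `X ⟶ Δ[1]` constant at the vertex `k`. -/
def constΔ1 (X : SSet) (k : Fin 2) : X ⟶ Δ[1] where
  app m := TypeCat.ofHom fun _ => SSet.stdSimplex.const 1 k m
  naturality := by intros; rfl

/-- `H : X ⨯ Δ[1] ⟶ Y` is a (simplicial) homotopy from `a` to `b` if it restricts to `a`
on `X × {0}` and to `b` on `X × {1}`. -/
def IsHomotopy {X Y : SSet} (H : X ⨯ Δ[1] ⟶ Y) (a b : X ⟶ Y) : Prop :=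
  prod.lift (𝟙 X) (constΔ1 X 0) ≫ H = a ∧ prod.lift (𝟙 X) (constΔ1 X 1) ≫ H = b

/-- "There is a homotopy from `a` to `b`". -/
def HtpyRel (X Y : SSet) (a b : X ⟶ Y) : Prop := ∃ H, IsHomotopy H a b

/-- The maximal vertex `φ(k)` of an object `([k], φ)` of `D[n]`. -/
def maxV {n : ℕ} (x : DObj n) : Fin (n + 1) := x.φ (Fin.last x.k)

lemma maxV_le {n : ℕ} {x y : DObj n} (h : x ⟶ y) : maxV x ≤ maxV y := by
  have h1 : maxV x = y.φ (h.f (Fin.last x.k)) :=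
    (congrFun (congrArg (fun (f : Fin (x.k + 1) →o Fin (n + 1)) =>
      (f : Fin (x.k + 1) → Fin (n + 1))) h.comm) (Fin.last x.k)).symm
  rw [h1]
  exact y.φ.monotone le_top

/-- The map `N D[a] ⟶ Δ[1]` induced by an order map `σ : [a] → [1]`, sending a simplex
`x₀ → ⋯ → x_m` of the nerve to `i ↦ σ (maxV xᵢ)`. -/
def cmap (a : SimplexCategory) (σ : Fin (a.len + 1) →o Fin 2) : ND.obj a ⟶ Δ[1] where
  app m := TypeCat.ofHom fun x => stdSimplex.objMk ⟨fun i => σ (maxV (x.obj i)), fun i j hij =>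
    σ.monotone (maxV_le (x.map (homOfLE hij)))⟩
  naturality _ _ _ := rfl

lemma cmap_natural {a b : SimplexCategory} (μ : b ⟶ a) (σ : Fin (a.len + 1) →o Fin 2) :
    ND.map μ ≫ cmap a σ = cmap b (σ.comp μ.toOrderHom) := rfl

lemma cmap_const (a : SimplexCategory) (k : Fin 2) :
    cmap a (OrderHom.const _ k) = constΔ1 (ND.obj a) k := rfl

lemma comp_constΔ1 {X Y : SSet} (x : X ⟶ Y) (k : Fin 2) :
    x ≫ constΔ1 Y k = constΔ1 X k := rfl

/-- The core of the homotopy on `Ex`. -/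
def ExCore {K L : SSet} (H : K ⨯ Δ[1] ⟶ L) (m : SimplexCategoryᵒᵖ)
    (A : ND.obj m.unop ⟶ K) (s : Δ[1].obj m) : ND.obj m.unop ⟶ L :=
  prod.lift A (cmap m.unop s.down.toOrderHom) ≫ H

lemma ExCore_natural {K L : SSet} (H : K ⨯ Δ[1] ⟶ L) {m m' : SimplexCategoryᵒᵖ}
    (θ : m ⟶ m') (A : ND.obj m.unop ⟶ K) (s : Δ[1].obj m) :
    ExCore H m' (ND.map θ.unop ≫ A) (Δ[1].map θ s) = ND.map θ.unop ≫ ExCore H m A s := by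
  dsimp only [ExCore]
  have h1 : cmap m'.unop (Δ[1].map θ s).down.toOrderHom
      = ND.map θ.unop ≫ cmap m.unop s.down.toOrderHom := rfl
  rw [h1, ← Category.assoc, ← prod.comp_lift, Category.assoc]

/-- The homotopy on `Ex` induced by a homotopy `H`. -/
def ExHtpy {K L : SSet} (H : K ⨯ Δ[1] ⟶ L) : Ex K ⨯ Δ[1] ⟶ Ex L where
  app m := TypeCat.ofHom fun x => ExCore H m ((prod.fst : Ex K ⨯ Δ[1] ⟶ Ex K).app m x)
    ((prod.snd : Ex K ⨯ Δ[1] ⟶ Δ[1]).app m x)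
  naturality m m' θ := by
    refine ConcreteCategory.hom_ext _ _ fun x => ?_
    have hf := ConcreteCategory.congr_hom ((prod.fst : Ex K ⨯ Δ[1] ⟶ Ex K).naturality θ) x
    have hs := ConcreteCategory.congr_hom ((prod.snd : Ex K ⨯ Δ[1] ⟶ Δ[1]).naturality θ) x
    show ExCore H m' _ _ = (Ex L).map θ (ExCore H m _ _)
    refine (congrArg₂ (ExCore H m') hf hs).trans ?_
    exact ExCore_natural H θ _ _

lemma ExHtpy_endpoint {K L : SSet} (H : K ⨯ Δ[1] ⟶ L) (k : Fin 2) (e : K ⟶ L)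
    (he : prod.lift (𝟙 K) (constΔ1 K k) ≫ H = e) :
    prod.lift (𝟙 (Ex K)) (constΔ1 (Ex K) k) ≫ ExHtpy H = ExMap e := by
  apply NatTrans.ext
  funext m
  refine ConcreteCategory.hom_ext _ _ fun x => ?_
  have hf : (prod.fst : Ex K ⨯ Δ[1] ⟶ Ex K).app m
      ((prod.lift (𝟙 (Ex K)) (constΔ1 (Ex K) k)).app m x) = x := by
    have := ConcreteCategory.congr_hom (congrArg (fun (t : Ex K ⟶ Ex K) => t.app m)
      (prod.lift_fst (𝟙 (Ex K)) (constΔ1 (Ex K) k))) x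
    exact this
  have hs : (prod.snd : Ex K ⨯ Δ[1] ⟶ Δ[1]).app m
      ((prod.lift (𝟙 (Ex K)) (constΔ1 (Ex K) k)).app m x) = stdSimplex.const 1 k m := by
    have := ConcreteCategory.congr_hom (congrArg (fun (t : Ex K ⟶ Δ[1]) => t.app m)
      (prod.lift_snd (𝟙 (Ex K)) (constΔ1 (Ex K) k))) x
    exact this
  show ExCore H m ((prod.fst : Ex K ⨯ Δ[1] ⟶ Ex K).app m
      ((prod.lift (𝟙 (Ex K)) (constΔ1 (Ex K) k)).app m x)) ((prod.snd : Ex K ⨯ Δ[1] ⟶ Δ[1]).app m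
      ((prod.lift (𝟙 (Ex K)) (constΔ1 (Ex K) k)).app m x)) = x ≫ e
  rw [hf, hs]
  dsimp only [ExCore]
  have h2 : cmap m.unop (stdSimplex.const 1 k m).down.toOrderHom
      = constΔ1 (ND.obj m.unop) k := cmap_const m.unop k
  rw [h2]
  have h3 : prod.lift x (constΔ1 (ND.obj m.unop) k)
      = x ≫ prod.lift (𝟙 K) (constΔ1 K k) := by
    erw [prod.comp_lift, Category.comp_id, comp_constΔ1]
  erw [h3, Category.assoc, he]

lemma HtpyRel_Ex {X Y : SSet} {a b : X ⟶ Y} (h : HtpyRel X Y a b) :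
    HtpyRel (Ex X) (Ex Y) (ExMap a) (ExMap b) := by
  obtain ⟨H, h0, h1⟩ := h
  exact ⟨ExHtpy H, ExHtpy_endpoint H 0 a h0, ExHtpy_endpoint H 1 b h1⟩

lemma ExMap_id (K : SSet) : ExMap (𝟙 K) = 𝟙 (Ex K) := by
  apply NatTrans.ext
  funext m
  refine ConcreteCategory.hom_ext _ _ fun x => ?_
  exact Category.comp_id x

lemma ExMap_comp {K L M : SSet} (f : K ⟶ L) (g : L ⟶ M) :
    ExMap (f ≫ g) = ExMap f ≫ ExMap g := by
  apply NatTrans.ext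
  funext m
  refine ConcreteCategory.hom_ext _ _ fun x => ?_
  exact (Category.assoc x f g).symm

lemma EqvGen_ExMap {X Y : SSet} {u v : X ⟶ Y} (h : Relation.EqvGen (HtpyRel X Y) u v) :
    Relation.EqvGen (HtpyRel (Ex X) (Ex Y)) (ExMap u) (ExMap v) := by
  induction h with
  | rel _ _ h => exact Relation.EqvGen.rel _ _ (HtpyRel_Ex h)
  | refl _ => exact Relation.EqvGen.refl _
  | symm _ _ _ ih => exact Relation.EqvGen.symm _ _ ih
  | trans _ _ _ _ _ ih1 ih2 => exact Relation.EqvGen.trans _ _ _ ih1 ih2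

/-- if `f, g : K ⟶ L` are homotopic maps of simplicial sets, then
`𝐄𝐱 f, 𝐄𝐱 g : 𝐄𝐱 K ⟶ 𝐄𝐱 L` are homotopic; in particular, `𝐄𝐱` preserves simplicial
homotopy equivalences (where "homotopic" is the equivalence relation generated by
`Δ[1]`-homotopies). -/
theorem ex_preserves_homotopies_and_homotopy_equivalences :
    (∀ (K L : SSet) (f g : K ⟶ L) (H : K ⨯ Δ[1] ⟶ L), IsHomotopy H f g →
      ∃ H' : Ex K ⨯ Δ[1] ⟶ Ex L, IsHomotopy H' (ExMap f) (ExMap g)) ∧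
    (∀ (K L : SSet) (f : K ⟶ L),
      (∃ g : L ⟶ K, Relation.EqvGen (HtpyRel K K) (f ≫ g) (𝟙 K) ∧
        Relation.EqvGen (HtpyRel L L) (g ≫ f) (𝟙 L)) →
      ∃ g' : Ex L ⟶ Ex K, Relation.EqvGen (HtpyRel (Ex K) (Ex K)) (ExMap f ≫ g') (𝟙 (Ex K)) ∧
        Relation.EqvGen (HtpyRel (Ex L) (Ex L)) (g' ≫ ExMap f) (𝟙 (Ex L))) := by
  constructor
  · intro K L f g H hH
    exact ⟨ExHtpy H, ExHtpy_endpoint H 0 f hH.1, ExHtpy_endpoint H 1 g hH.2⟩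
  · intro K L f hf
    obtain ⟨g, h1, h2⟩ := hf
    refine ⟨ExMap g, ?_, ?_⟩
    · rw [← ExMap_comp, ← ExMap_id K]
      exact EqvGen_ExMap h1
    · rw [← ExMap_comp, ← ExMap_id L]
      exact EqvGen_ExMap h2


end
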